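/- (Corollary 1.5(1), twisted case; eq. (1.37).) Let l be a natural number. In the formal power series ring ℚ[[x₁, x₂, y₁, …, y_l, u]], the homogeneous component of total degree 2 of Π_{j=1}^{2} A(xⱼ) · Π_{k=1}^{l} 2cosh(yₖ/2) · cosh(u/2)^{-2} + 2^{l+1} · Π_{j=1}^{2} A(xⱼ) · cosh(u/2) equals -2^{l-3}·(x₁² + x₂² - Σ_{k=1}^{l} yₖ²). (This is the Chern-root form of {Â(TX)·det^{1/2}(2cosh((√-1/4π)R^W))/cosh²(c/2)}^{(4)} + 2^{l+1}{Â(TX)cosh(c/2)}^{(4)} = -2^{l-3}(p₁(TX) - p₁(W)) on a 4-dimensional manifold X, with W of rank 2l and c the Euler form of a rank-2 oriented bundle ξ.) -/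

import Mathlib

open MvPowerSeries

/-- Formal exponential of a multivariate power series (with zero constant term):
the coefficient of a monomial `m` in `exp S` is `Σ_k coeff m (S^k) / k!`. -/
noncomputable def mexp {σ : Type*} (S : MvPowerSeries σ ℚ) : MvPowerSeries σ ℚ :=
  fun m => ∑ k ∈ Finset.range ((m.sum fun _ e => e) + 1),
    ((k.factorial : ℚ))⁻¹ * MvPowerSeries.coeff m (S ^ k)

/-- Formal hyperbolic cosine: `cosh S = (exp S + exp (-S)) / 2`. -/
noncomputable def mcosh {σ : Type*} (S : MvPowerSeries σ ℚ) : MvPowerSeries σ ℚ :=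
  (2 : ℚ)⁻¹ • (mexp S + mexp (-S))

namespace AnomalyAux
set_option maxHeartbeats 1000000

variable {σ : Type*}

lemma deg_add (p q : σ →₀ ℕ) :
    ((p + q).sum fun _ e => e) = (p.sum fun _ e => e) + (q.sum fun _ e => e) :=
  Finsupp.sum_add_index' (fun _ => rfl) (fun _ _ _ => rfl)

lemma deg_single (i : σ) (k : ℕ) : ((Finsupp.single i k).sum fun _ e => e) = k :=
  Finsupp.sum_single_index rfl

lemma apply_le_deg (m : σ →₀ ℕ) (i : σ) : m i ≤ m.sum fun _ e => e := by
  classical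
  by_cases h : m i = 0
  · simp [h]
  · exact Finset.single_le_sum (f := fun a => m a) (fun _ _ => Nat.zero_le _)
      (Finsupp.mem_support_iff.mpr h)

lemma eq_single (m : σ →₀ ℕ) (i : σ) (h : (m.sum fun _ e => e) ≤ m i) :
    m = Finsupp.single i (m i) := by
  classical
  ext a
  rcases eq_or_ne a i with rfl | ha
  · simp
  · rw [Finsupp.single_apply, if_neg (Ne.symm ha)]
    by_contra hma
    have h2 : (m.sum fun _ e => e) = ((m.erase a).sum fun _ e => e) + m a := by
      conv_lhs => rw [← Finsupp.erase_add_single a m]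
      rw [deg_add, deg_single]
    have h3 : m i ≤ (m.erase a).sum fun _ e => e := by
      have h4 := apply_le_deg (m.erase a) i
      rwa [Finsupp.erase_ne (Ne.symm ha)] at h4
    omega

/-- The ideal of power series whose coefficients vanish in all total degrees `≤ n`. -/
noncomputable def V (n : ℕ) : Ideal (MvPowerSeries σ ℚ) where
  carrier := {f | ∀ m : σ →₀ ℕ, (m.sum fun _ e => e) ≤ n → MvPowerSeries.coeff m f = 0}
  add_mem' := fun hf hg m hm => by rw [map_add, hf m hm, hg m hm, add_zero]
  zero_mem' := fun m _ => map_zero _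
  smul_mem' := fun c f hf m hm => by
    classical
    rw [smul_eq_mul, coeff_mul]
    refine Finset.sum_eq_zero fun p hp => ?_
    rw [Finset.HasAntidiagonal.mem_antidiagonal] at hp
    have hd := deg_add p.1 p.2
    rw [hp] at hd
    rw [hf p.2 (by omega), mul_zero]

lemma mem_V {n : ℕ} {f : MvPowerSeries σ ℚ} :
    f ∈ V n ↔ ∀ m : σ →₀ ℕ, (m.sum fun _ e => e) ≤ n → MvPowerSeries.coeff m f = 0 :=
  Iff.rfl

lemma mul_mem_V2 {f g : MvPowerSeries σ ℚ} (hf : f ∈ V 1) (hg : g ∈ V 1) : f * g ∈ V 2 := by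
  rw [mem_V]
  intro m hm
  classical
  rw [coeff_mul]
  refine Finset.sum_eq_zero fun p hp => ?_
  rw [Finset.HasAntidiagonal.mem_antidiagonal] at hp
  have hd := deg_add p.1 p.2
  rw [hp] at hd
  by_cases h1 : (p.1.sum fun _ e => e) ≤ 1
  · rw [hf p.1 h1, zero_mul]
  · rw [hg p.2 (by omega), mul_zero]

lemma Xsq_mem_V1 (i : σ) : (X i : MvPowerSeries σ ℚ) ^ 2 ∈ V 1 := by
  rw [mem_V]
  intro m hm
  classical
  rw [coeff_X_pow, if_neg]
  intro h
  rw [h, deg_single] at hm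
  omega

lemma coeff_mexp [DecidableEq σ] (c : ℚ) (i : σ) (m : σ →₀ ℕ) :
    MvPowerSeries.coeff m (mexp (c • X i)) =
      if m = Finsupp.single i (m i) then c ^ (m i) * ((m i).factorial : ℚ)⁻¹ else 0 := by
  have hterm : ∀ k, ((k.factorial : ℚ))⁻¹ * MvPowerSeries.coeff m ((c • X i) ^ k)
      = if k = m i then
          (if m = Finsupp.single i (m i) then c ^ (m i) * ((m i).factorial : ℚ)⁻¹ else 0)
        else 0 := by
    intro k
    rw [smul_pow, coeff_smul, coeff_X_pow]
    by_cases h : m = Finsupp.single i k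
    · have hk : m i = k := by rw [h, Finsupp.single_eq_same]
      subst hk
      rw [if_pos rfl, if_pos h, if_pos h]
      ring
    · rw [if_neg h, mul_zero, mul_zero]
      by_cases hk : k = m i
      · rw [if_pos hk, if_neg]
        intro h'
        exact h (by rw [h', hk])
      · rw [if_neg hk]
  have hcoeff : MvPowerSeries.coeff m (mexp (c • X i)) =
      ∑ k ∈ Finset.range ((m.sum fun _ e => e) + 1),
        ((k.factorial : ℚ))⁻¹ * MvPowerSeries.coeff m ((c • X i) ^ k) := rfl
  rw [hcoeff, Finset.sum_congr rfl fun k _ => hterm k, Finset.sum_ite_eq' _ (m i), if_pos]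
  rw [Finset.mem_range]
  have := apply_le_deg m i
  omega

noncomputable def msinh2 (i : σ) : MvPowerSeries σ ℚ :=
  mexp ((2 : ℚ)⁻¹ • X i) - mexp (-((2 : ℚ)⁻¹ • X i))

lemma coeff_msinh2 [DecidableEq σ] (i : σ) (m : σ →₀ ℕ) :
    MvPowerSeries.coeff m (msinh2 i) =
      if m = Finsupp.single i (m i) then
        (((2:ℚ)⁻¹) ^ (m i) - (-(2:ℚ)⁻¹) ^ (m i)) * ((m i).factorial : ℚ)⁻¹ else 0 := by
  rw [msinh2, map_sub, ← neg_smul, coeff_mexp, coeff_mexp]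
  split_ifs <;> ring

lemma coeff_msinh2_low [DecidableEq σ] (i : σ) (q : σ →₀ ℕ) (hq : (q.sum fun _ e => e) ≤ 3) :
    MvPowerSeries.coeff q (msinh2 i) =
      (if q = Finsupp.single i 1 then 1 else 0)
        + (if q = Finsupp.single i 3 then (24:ℚ)⁻¹ else 0) := by
  rw [coeff_msinh2]
  by_cases h : q = Finsupp.single i (q i)
  · rw [if_pos h]
    have hqi : q i ≤ 3 := by
      have h5 := apply_le_deg q i
      omega
    set k := q i with hk
    clear_value k
    subst h
    interval_cases k <;>
      simp [Finsupp.single_eq_single_iff, eq_comm, Nat.factorial] <;> norm_num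
  · have h1 : q ≠ Finsupp.single i 1 := by
      intro h1; subst h1; exact h (by simp)
    have h3 : q ≠ Finsupp.single i 3 := by
      intro h3; subst h3; exact h (by simp)
    rw [if_neg h, if_neg h1, if_neg h3, add_zero]

lemma coeff_mul_msinh2 [DecidableEq σ] (f : MvPowerSeries σ ℚ) (i : σ) (m : σ →₀ ℕ)
    (hm : (m.sum fun _ e => e) ≤ 2) :
    MvPowerSeries.coeff (m + Finsupp.single i 1) (f * msinh2 i)
      = MvPowerSeries.coeff m f
        + (if m = Finsupp.single i 2 then (24:ℚ)⁻¹ * MvPowerSeries.coeff 0 f else 0) := by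
  rw [coeff_mul]
  have hsplit : ∀ p ∈ Finset.HasAntidiagonal.antidiagonal (m + Finsupp.single i 1),
      MvPowerSeries.coeff p.1 f * MvPowerSeries.coeff p.2 (msinh2 i)
        = (if p.2 = Finsupp.single i 1 then MvPowerSeries.coeff p.1 f else 0)
          + (if p.2 = Finsupp.single i 3 then (24:ℚ)⁻¹ * MvPowerSeries.coeff p.1 f else 0) := by
    intro p hp
    rw [Finset.HasAntidiagonal.mem_antidiagonal] at hp
    have hdq : (p.2.sum fun _ e => e) ≤ 3 := by
      have h1 := deg_add p.1 p.2
      have h2 := deg_add m (Finsupp.single i 1)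
      rw [hp] at h1
      rw [deg_single] at h2
      omega
    rw [coeff_msinh2_low i p.2 hdq, mul_add]
    congr 1 <;> split_ifs <;> ring
  rw [Finset.sum_congr rfl hsplit, Finset.sum_add_distrib]
  congr 1
  · refine (Finset.sum_eq_single_of_mem ((m, Finsupp.single i 1) : (σ →₀ ℕ) × (σ →₀ ℕ))
      (Finset.HasAntidiagonal.mem_antidiagonal.mpr rfl) ?_).trans (if_pos rfl)
    rintro ⟨p₁, p₂⟩ hb hne
    rw [Finset.HasAntidiagonal.mem_antidiagonal] at hb
    dsimp only
    rw [if_neg]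
    intro h2
    subst h2
    exact hne (by rw [Prod.mk.injEq]; exact ⟨add_right_cancel hb, rfl⟩)
  · by_cases hm2 : m = Finsupp.single i 2
    · subst hm2
      have hsum : Finsupp.single i 2 + Finsupp.single i 1 = Finsupp.single i 3 :=
        (Finsupp.single_add i 2 1).symm
      rw [if_pos rfl]
      refine (Finset.sum_eq_single_of_mem ((0, Finsupp.single i 3) : (σ →₀ ℕ) × (σ →₀ ℕ))
        (Finset.HasAntidiagonal.mem_antidiagonal.mpr (by rw [zero_add, hsum])) ?_).trans (if_pos rfl)
      rintro ⟨p₁, p₂⟩ hb hne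
      rw [Finset.HasAntidiagonal.mem_antidiagonal, hsum] at hb
      dsimp only
      rw [if_neg]
      intro h2
      subst h2
      apply hne
      rw [Prod.mk.injEq]
      refine ⟨?_, rfl⟩
      have : p₁ + Finsupp.single i 3 = 0 + Finsupp.single i 3 := by rw [zero_add, hb]
      exact add_right_cancel this
    · rw [if_neg hm2]
      refine Finset.sum_eq_zero ?_
      rintro ⟨p₁, p₂⟩ hb
      rw [Finset.HasAntidiagonal.mem_antidiagonal] at hb
      dsimp only
      rw [if_neg]
      intro h3
      subst h3
      apply hm2
      have happ := congrArg (fun g => g i) hb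
      simp only [Finsupp.add_apply, Finsupp.single_eq_same] at happ
      have hmi : 2 ≤ m i := by omega
      have h5 := eq_single m i (le_trans hm hmi)
      have h6 : m i = 2 := le_antisymm (le_trans (apply_le_deg m i) hm) hmi
      rw [h6] at h5
      exact h5

lemma coeff_A_eq [DecidableEq σ] (Aj : MvPowerSeries σ ℚ) (i : σ)
    (hA : Aj * msinh2 i = X i) (m : σ →₀ ℕ) (hm : (m.sum fun _ e => e) ≤ 2) :
    MvPowerSeries.coeff m Aj
      = (if m = 0 then 1 else 0) + (if m = Finsupp.single i 2 then -(24:ℚ)⁻¹ else 0) := by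
  have hA0 : MvPowerSeries.coeff 0 Aj = 1 := by
    have h := coeff_mul_msinh2 Aj i 0 (by simp)
    rw [hA, zero_add, coeff_X, if_pos rfl, if_neg, add_zero] at h
    · exact h.symm
    · intro h0
      have := congrArg (fun g => g i) h0
      simp [Finsupp.single_eq_same] at this
  have h := coeff_mul_msinh2 Aj i m hm
  rw [hA, coeff_X, hA0, mul_one] at h
  have hiff : m + Finsupp.single i 1 = Finsupp.single i 1 ↔ m = 0 := by
    constructor
    · intro hh
      have : m + Finsupp.single i 1 = 0 + Finsupp.single i 1 := by rw [zero_add, hh]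
      exact add_right_cancel this
    · intro hh; rw [hh, zero_add]
  rw [if_congr hiff rfl rfl] at h
  split_ifs at h ⊢ <;> linarith

lemma A_sub_mem [DecidableEq σ] (Aj : MvPowerSeries σ ℚ) (i : σ)
    (hA : Aj * msinh2 i = X i) :
    Aj - (1 - (24:ℚ)⁻¹ • (X i) ^ 2) ∈ V 2 := by
  rw [mem_V]
  intro m hm
  rw [map_sub, map_sub, coeff_one, coeff_smul, coeff_X_pow, coeff_A_eq Aj i hA m hm]
  split_ifs <;> ring

lemma mexp_sub_mem [DecidableEq σ] (c : ℚ) (i : σ) :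
    mexp (c • X i) - (1 + c • X i + (c ^ 2 * (2:ℚ)⁻¹) • (X i) ^ 2) ∈ V 2 := by
  rw [mem_V]
  intro m hm
  rw [map_sub, map_add, map_add, coeff_one, coeff_smul, coeff_smul, coeff_X_pow, coeff_X,
    coeff_mexp]
  by_cases h : m = Finsupp.single i (m i)
  · rw [if_pos h]
    have hk : m i ≤ 2 := le_trans (apply_le_deg m i) hm
    set k := m i with hkdef
    clear_value k
    subst h
    interval_cases k <;>
      simp [Finsupp.single_eq_single_iff, eq_comm, Nat.factorial] <;> norm_num
  · have h0 : m ≠ 0 := by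
      intro h0; subst h0; exact h (by simp)
    have h1 : m ≠ Finsupp.single i 1 := by
      intro h1; subst h1; exact h (by simp)
    have h2 : m ≠ Finsupp.single i 2 := by
      intro h2; subst h2; exact h (by simp)
    rw [if_neg h, if_neg h0, if_neg h1, if_neg h2]
    ring

section Quot

variable {σ : Type*} [DecidableEq σ]

/-- Quotient map onto the quotient by `V 2`. -/
noncomputable def pi (σ : Type*) := Ideal.Quotient.mkₐ ℚ (V (σ := σ) 2)

lemma pi_eq {f g : MvPowerSeries σ ℚ} (h : f - g ∈ V 2) : pi σ f = pi σ g := by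
  show Ideal.Quotient.mk (V 2) f = Ideal.Quotient.mk (V 2) g
  exact Ideal.Quotient.eq.mpr h

/-- The square-zero ideal generated by degree-`≥ 2` elements in the quotient. -/
noncomputable def J (σ : Type*) : Ideal (MvPowerSeries σ ℚ ⧸ V (σ := σ) 2) :=
  (V 1).map (Ideal.Quotient.mk (V 2))

lemma J_sq {x y : MvPowerSeries σ ℚ ⧸ V (σ := σ) 2}
    (hx : x ∈ J σ) (hy : y ∈ J σ) : x * y = 0 := by
  have h : J σ * J σ ≤ ⊥ := by
    rw [← Ideal.map_quotient_self (V (σ := σ) 2), J, ← Ideal.map_mul]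
    exact Ideal.map_mono (Ideal.mul_le.mpr fun r hr s hs => mul_mem_V2 hr hs)
  simpa using h (Ideal.mul_mem_mul hx hy)

lemma Xsq_mem_J (s : σ) : pi σ ((X s : MvPowerSeries σ ℚ) ^ 2) ∈ J σ :=
  Ideal.mem_map_of_mem _ (Xsq_mem_V1 s)

lemma smul_mem_J (c : ℚ) {x : MvPowerSeries σ ℚ ⧸ V (σ := σ) 2} (hx : x ∈ J σ) :
    c • x ∈ J σ := by
  rw [show c • x = algebraMap ℚ _ c * x from Algebra.smul_def c x]
  exact Ideal.mul_mem_left _ _ hx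

lemma one_add_mul_one_add {x y : MvPowerSeries σ ℚ ⧸ V (σ := σ) 2}
    (hx : x ∈ J σ) (hy : y ∈ J σ) :
    (1 + x) * (1 + y) = 1 + (x + y) := by
  linear_combination J_sq hx hy

lemma pi_mexp (c : ℚ) (i : σ) :
    pi σ (mexp (c • X i)) =
      1 + c • pi σ (X i) + (c ^ 2 * (2:ℚ)⁻¹) • pi σ ((X i) ^ 2) := by
  rw [pi_eq (mexp_sub_mem c i), map_add, map_add, map_one, map_smul, map_smul]

lemma pi_coshfactor (i : σ) :
    pi σ (mexp ((2:ℚ)⁻¹ • X i) + mexp (-((2:ℚ)⁻¹ • X i))) =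
      2 + (4:ℚ)⁻¹ • pi σ ((X i) ^ 2) := by
  have h2 : -((2:ℚ)⁻¹ • X i) = ((-(2:ℚ)⁻¹) • X i : MvPowerSeries σ ℚ) := (neg_smul _ _).symm
  rw [map_add, pi_mexp, h2, pi_mexp]
  have h3 : (2 : MvPowerSeries σ ℚ ⧸ V (σ := σ) 2) = (2:ℚ) • 1 := by
    rw [show ((2:ℚ) • (1 : MvPowerSeries σ ℚ ⧸ V (σ := σ) 2))
      = algebraMap ℚ _ 2 * 1 from Algebra.smul_def (2:ℚ)
        (1 : MvPowerSeries σ ℚ ⧸ V (σ := σ) 2), mul_one, map_ofNat]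
  rw [h3]
  module

lemma pi_mcosh (i : σ) :
    pi σ (mcosh ((2:ℚ)⁻¹ • X i)) = 1 + (8:ℚ)⁻¹ • pi σ ((X i) ^ 2) := by
  rw [mcosh, map_smul, pi_coshfactor]
  have h3 : (2 : MvPowerSeries σ ℚ ⧸ V (σ := σ) 2) = (2:ℚ) • 1 := by
    rw [show ((2:ℚ) • (1 : MvPowerSeries σ ℚ ⧸ V (σ := σ) 2))
      = algebraMap ℚ _ 2 * 1 from Algebra.smul_def (2:ℚ)
        (1 : MvPowerSeries σ ℚ ⧸ V (σ := σ) 2), mul_one, map_ofNat]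
  rw [h3]
  module

lemma constCoeff_mcosh (i : σ) :
    MvPowerSeries.constantCoeff (mcosh ((2:ℚ)⁻¹ • X i)) = 1 := by
  rw [← MvPowerSeries.coeff_zero_eq_constantCoeff_apply, mcosh, coeff_smul, map_add,
    ← neg_smul, coeff_mexp, coeff_mexp]
  norm_num

lemma pi_mcosh_inv (i : σ) :
    pi σ ((mcosh ((2:ℚ)⁻¹ • X i))⁻¹) = 1 - (8:ℚ)⁻¹ • pi σ ((X i) ^ 2) := by
  have hwJ : (8:ℚ)⁻¹ • pi σ ((X i) ^ 2) ∈ J σ := smul_mem_J _ (Xsq_mem_J i)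
  have hconst : MvPowerSeries.constantCoeff (mcosh ((2:ℚ)⁻¹ • X i)) ≠ 0 := by
    rw [constCoeff_mcosh]; norm_num
  have hmul : pi σ ((mcosh ((2:ℚ)⁻¹ • X i))⁻¹) * pi σ (mcosh ((2:ℚ)⁻¹ • X i)) = 1 := by
    rw [← map_mul, MvPowerSeries.inv_mul_cancel _ hconst, map_one]
  have hcancel : pi σ (mcosh ((2:ℚ)⁻¹ • X i)) * (1 - (8:ℚ)⁻¹ • pi σ ((X i) ^ 2)) = 1 := by
    rw [pi_mcosh]
    linear_combination (-1 : MvPowerSeries σ ℚ ⧸ V (σ := σ) 2) * J_sq hwJ hwJ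
  calc pi σ ((mcosh ((2:ℚ)⁻¹ • X i))⁻¹)
      = pi σ ((mcosh ((2:ℚ)⁻¹ • X i))⁻¹) *
          (pi σ (mcosh ((2:ℚ)⁻¹ • X i)) * (1 - (8:ℚ)⁻¹ • pi σ ((X i) ^ 2))) := by
        rw [hcancel, mul_one]
    _ = (pi σ ((mcosh ((2:ℚ)⁻¹ • X i))⁻¹) * pi σ (mcosh ((2:ℚ)⁻¹ • X i))) *
          (1 - (8:ℚ)⁻¹ • pi σ ((X i) ^ 2)) := by ring
    _ = 1 - (8:ℚ)⁻¹ • pi σ ((X i) ^ 2) := by rw [hmul, one_mul]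

lemma mul_helper {R : Type*} [CommRing R] [Algebra ℚ R] (x y : R) (hxy : x * y = 0)
    (a b : ℚ) :
    (a • (1:R) + x) * (b • (1:R) + y) = (a * b) • (1:R) + (a • y + b • x) := by
  simp only [Algebra.smul_def, map_mul]
  linear_combination hxy

lemma prod_two_add {R : Type*} [CommRing R] [Algebra ℚ R] {ι : Type*} (s : Finset ι)
    (t : ι → R) (h : ∀ i ∈ s, ∀ j ∈ s, t i * t j = 0) :
    ∏ k ∈ s, ((2:R) + t k) =
      ((2:ℚ) ^ s.card) • ((1:R) + (2:ℚ)⁻¹ • ∑ k ∈ s, t k) := by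
  induction s using Finset.cons_induction with
  | empty => simp
  | cons a s ha ih =>
    rw [Finset.prod_cons, Finset.sum_cons, Finset.card_cons,
      ih (fun i hi j hj => h i (Finset.mem_cons_of_mem hi) j (Finset.mem_cons_of_mem hj))]
    have h0 : t a * ((2:ℚ)⁻¹ • ∑ k ∈ s, t k) = 0 := by
      rw [mul_smul_comm, Finset.mul_sum, Finset.sum_eq_zero
        (fun j hj => h a (Finset.mem_cons_self a s) j (Finset.mem_cons_of_mem hj)), smul_zero]
    have h2 : (2:R) + t a = (2:ℚ) • (1:R) + t a := by
      rw [Algebra.smul_def, mul_one, map_ofNat]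

    have h1 : (1:R) + (2:ℚ)⁻¹ • ∑ k ∈ s, t k
        = (1:ℚ) • (1:R) + (2:ℚ)⁻¹ • ∑ k ∈ s, t k := by rw [one_smul]
    rw [mul_smul_comm, h2, h1, mul_helper _ _ h0]
    module

end Quot

end AnomalyAux

namespace AnomalyAux

set_option maxHeartbeats 2000000 in
set_option synthInstance.maxHeartbeats 500000 in
lemma main {σ : Type*} [DecidableEq σ] (l : ℕ) (x : Fin 2 → σ) (y : Fin l → σ) (u : σ)
    (A : Fin 2 → MvPowerSeries σ ℚ)
    (hA : ∀ j, A j * msinh2 (x j) = X (x j))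
    (m : σ →₀ ℕ) (hm : (m.sum fun _ e => e) = 2) :
    MvPowerSeries.coeff m
      ((∏ j, A j) *
          (∏ k, (mexp ((2 : ℚ)⁻¹ • X (y k)) + mexp (-((2 : ℚ)⁻¹ • X (y k))))) *
          ((mcosh ((2 : ℚ)⁻¹ • X u))⁻¹) ^ 2
        + (2 : ℚ) ^ (l + 1) • ((∏ j, A j) * mcosh ((2 : ℚ)⁻¹ • X u)))
    = MvPowerSeries.coeff m
      (-(((2:ℚ) ^ l * 8⁻¹) •
        (X (x 0) ^ 2 + X (x 1) ^ 2 - ∑ k, X (y k) ^ 2))) := by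
  have hm0 : m ≠ 0 := by
    intro h
    rw [h, Finsupp.sum_zero_index] at hm
    exact two_ne_zero hm.symm
  -- reduce to an identity in the quotient ring
  have glue : ∀ f g : MvPowerSeries σ ℚ,
      pi σ f = pi σ (g + (3 * (2:ℚ) ^ l) • 1) →
      MvPowerSeries.coeff m f = MvPowerSeries.coeff m g := by
    intro f g hfg
    have hmem : f - (g + (3 * (2:ℚ) ^ l) • 1) ∈ V 2 := Ideal.Quotient.eq.mp hfg
    have h0 := hmem m (le_of_eq hm)
    rw [map_sub, map_add, coeff_smul, coeff_one, if_neg hm0, mul_zero, add_zero,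
      sub_eq_zero] at h0
    exact h0
  apply glue
  have hWJ : ∀ s : σ, (pi σ ((X s : MvPowerSeries σ ℚ))) ^ 2 ∈ J σ := by
    intro s
    rw [← map_pow]
    exact Xsq_mem_J s
  -- the Â-factors
  have hAj : ∀ j : Fin 2, pi σ (A j)
      = 1 + -((24:ℚ)⁻¹ • (pi σ (X (x j) : MvPowerSeries σ ℚ)) ^ 2) := by
    intro j
    have h := pi_eq (A_sub_mem (A j) (x j) (hA j))
    rw [h, map_sub, map_one, map_smul, map_pow, sub_eq_add_neg]
  -- the cosh-factors
  have hC : pi σ (∏ k : Fin l, (mexp ((2 : ℚ)⁻¹ • X (y k)) +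
        mexp (-((2 : ℚ)⁻¹ • X (y k)))))
      = ((2:ℚ) ^ l) • ((1 : MvPowerSeries σ ℚ ⧸ V (σ := σ) 2)
          + (2:ℚ)⁻¹ • ∑ k : Fin l, (4:ℚ)⁻¹ • (pi σ (X (y k) : MvPowerSeries σ ℚ)) ^ 2) := by
    rw [map_prod]
    rw [Finset.prod_congr rfl (fun k (_ : k ∈ Finset.univ) =>
      show (pi σ) (mexp ((2:ℚ)⁻¹ • X (y k)) + mexp (-((2:ℚ)⁻¹ • X (y k))))
          = 2 + (4:ℚ)⁻¹ • ((pi σ) (X (y k) : MvPowerSeries σ ℚ)) ^ 2 from by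
        rw [pi_coshfactor (y k), map_pow])]
    rw [prod_two_add Finset.univ
      (fun k : Fin l => (4:ℚ)⁻¹ • (pi σ (X (y k) : MvPowerSeries σ ℚ)) ^ 2)
      (fun i _ j _ => J_sq (smul_mem_J _ (hWJ _)) (smul_mem_J _ (hWJ _)))]
    rw [Finset.card_univ, Fintype.card_fin]
  rw [show (∏ j, A j) = A 0 * A 1 from Fin.prod_univ_two A]
  simp only [map_add, map_mul, map_smul, map_neg, map_sub, map_pow, map_one]
  rw [hAj 0, hAj 1, hC, pi_mcosh_inv u, pi_mcosh u]
  rw [map_sum]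
  simp only [map_pow]
  -- abbreviations for the quadratic generators
  set W0 := (pi σ (X (x 0) : MvPowerSeries σ ℚ)) ^ 2 with hW0
  set W1 := (pi σ (X (x 1) : MvPowerSeries σ ℚ)) ^ 2 with hW1
  set U := (pi σ (X u : MvPowerSeries σ ℚ)) ^ 2 with hU
  set Sy := ∑ k : Fin l, (pi σ (X (y k) : MvPowerSeries σ ℚ)) ^ 2 with hSy
  have hSyJ : Sy ∈ J σ := Submodule.sum_mem _ fun k _ => hWJ _
  have hW0J : W0 ∈ J σ := hWJ _
  have hW1J : W1 ∈ J σ := hWJ _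
  have hUJ : U ∈ J σ := hWJ _
  rw [show (∑ k : Fin l, (4:ℚ)⁻¹ • (pi σ (X (y k) : MvPowerSeries σ ℚ)) ^ 2)
    = (4:ℚ)⁻¹ • Sy from (Finset.smul_sum).symm]
  -- collapse the products using square-zero-ness
  have ha : -((24:ℚ)⁻¹ • W0) + -((24:ℚ)⁻¹ • W1) ∈ J σ :=
    add_mem (neg_mem (smul_mem_J _ hW0J)) (neg_mem (smul_mem_J _ hW1J))
  have hs : (2:ℚ)⁻¹ • ((4:ℚ)⁻¹ • Sy) ∈ J σ := smul_mem_J _ (smul_mem_J _ hSyJ)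
  have hg : (8:ℚ)⁻¹ • U ∈ J σ := smul_mem_J _ hUJ
  rw [one_add_mul_one_add (neg_mem (smul_mem_J _ hW0J)) (neg_mem (smul_mem_J _ hW1J))]
  rw [sub_eq_add_neg (1 : MvPowerSeries σ ℚ ⧸ V (σ := σ) 2) ((8:ℚ)⁻¹ • U)]
  rw [pow_two]
  rw [mul_smul_comm]
  rw [one_add_mul_one_add ha hs]
  rw [one_add_mul_one_add (neg_mem hg) (neg_mem hg)]
  rw [smul_mul_assoc]
  rw [one_add_mul_one_add (add_mem ha hs) (add_mem (neg_mem hg) (neg_mem hg))]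
  rw [one_add_mul_one_add ha hg]
  module

end AnomalyAux


open AnomalyAux in
/-- Corollary 1.5(1), twisted case (eq. (1.37)): in degree 2 (form degree 4),
`{Â(TX) det^{1/2}(2cosh((√-1/4π)R^W)) / cosh²(c/2)}^{(4)} + 2^{l+1}{Â(TX) cosh(c/2)}^{(4)}
  = -2^{l-3}(p₁(TX) - p₁(W))`,
at the level of Chern roots: `±xⱼ` for `T_ℂX` (`dim X = 4`), `±yₖ` for `W_ℂ` (`rk W = 2l`),
and `u` the Euler form of the rank-2 bundle `ξ`. `A j` is the Â-series of `xⱼ`, and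
`(mcosh ((2:ℚ)⁻¹ • u))⁻¹` is the multiplicative inverse of the unit power series `cosh(u/2)`. -/
theorem anomaly_dim4_twisted (l : ℕ)
    (A : Fin 2 → MvPowerSeries ((Fin 2 ⊕ Fin l) ⊕ Unit) ℚ)
    (hA : ∀ j, A j * (mexp ((2 : ℚ)⁻¹ • X (Sum.inl (Sum.inl j))) -
        mexp (-((2 : ℚ)⁻¹ • X (Sum.inl (Sum.inl j))))) = X (Sum.inl (Sum.inl j)))
    (m : ((Fin 2 ⊕ Fin l) ⊕ Unit) →₀ ℕ) (hm : (m.sum fun _ e => e) = 2) :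
    MvPowerSeries.coeff m
      ((∏ j, A j) *
          (∏ k, (mexp ((2 : ℚ)⁻¹ • X (Sum.inl (Sum.inr k))) +
            mexp (-((2 : ℚ)⁻¹ • X (Sum.inl (Sum.inr k)))))) *
          ((mcosh ((2 : ℚ)⁻¹ • X (Sum.inr ())))⁻¹) ^ 2
        + (2 : ℚ) ^ (l + 1) • ((∏ j, A j) * mcosh ((2 : ℚ)⁻¹ • X (Sum.inr ()))))
    = MvPowerSeries.coeff m
      (-((2 : ℚ) ^ ((l : ℤ) - 3) •
        (X (Sum.inl (Sum.inl 0)) ^ 2 + X (Sum.inl (Sum.inl 1)) ^ 2 -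
          ∑ k, X (Sum.inl (Sum.inr k)) ^ 2))) := by
  have hr : (2:ℚ) ^ ((l : ℤ) - 3) = 2 ^ l * 8⁻¹ := by
    rw [zpow_sub₀ (by norm_num : (2:ℚ) ≠ 0), zpow_natCast]
    norm_num
    ring
  rw [hr]
  exact main l (fun j => Sum.inl (Sum.inl j)) (fun k => Sum.inl (Sum.inr k)) (Sum.inr ())
    A (fun j => hA j) m hm
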